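/- (Riemann–Lebesgue lemma for matrix multipliers) If A = ∑_{l∈ℤ} D_l belongs to L¹_r(ℓ²(H)), then ‖D_l‖_{B(ℓ²(H))} → 0 as |l| → ∞, where D_l is the l-th diagonal of A. -/

import Mathlib

open Finset Filter

noncomputable section

variable {H : Type*} [NormedAddCommGroup H] [InnerProductSpace ℂ H]
  [CompleteSpace H] [TopologicalSpace.SeparableSpace H]

/-- `A` defines a bounded operator on `ℓ²(H)` with norm at most `C`, expressed through
uniform bounds of the associated bilinear form on finitely supported sequences. -/
def SchurBoundedBy (A : ℕ → ℕ → (H →L[ℂ] H)) (C : ℝ) : Prop :=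
  ∀ (F G : Finset ℕ) (x y : ℕ → H),
    ‖∑ k ∈ G, ∑ j ∈ F, (inner ℂ (A k j (x j)) (y k) : ℂ)‖ ≤
      C * Real.sqrt (∑ j ∈ F, ‖x j‖ ^ 2) * Real.sqrt (∑ k ∈ G, ‖y k‖ ^ 2)

/-- `A ∈ B(ℓ²(H))`. -/
def MemB (A : ℕ → ℕ → (H →L[ℂ] H)) : Prop :=
  ∃ C, 0 ≤ C ∧ SchurBoundedBy A C

/-- The Schur product of two operator matrices: entrywise composition. -/
def schur (A B : ℕ → ℕ → (H →L[ℂ] H)) : ℕ → ℕ → (H →L[ℂ] H) :=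
  fun k j => (A k j).comp (B k j)

/-- `A` is a right Schur multiplier with multiplier norm at most `C`. -/
def MrBoundedBy (A : ℕ → ℕ → (H →L[ℂ] H)) (C : ℝ) : Prop :=
  ∀ (B : ℕ → ℕ → (H →L[ℂ] H)) (D : ℝ), 0 ≤ D → SchurBoundedBy B D →
    SchurBoundedBy (schur B A) (C * D)

/-- `A` is a left Schur multiplier with multiplier norm at most `C`. -/
def MlBoundedBy (A : ℕ → ℕ → (H →L[ℂ] H)) (C : ℝ) : Prop :=
  ∀ (B : ℕ → ℕ → (H →L[ℂ] H)) (D : ℝ), 0 ≤ D → SchurBoundedBy B D →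
    SchurBoundedBy (schur A B) (C * D)

/-- `A ∈ M_r(ℓ²(H))`. -/
def MemMr (A : ℕ → ℕ → (H →L[ℂ] H)) : Prop :=
  ∃ C, 0 ≤ C ∧ MrBoundedBy A C

/-- `A ∈ M_l(ℓ²(H))`. -/
def MemMl (A : ℕ → ℕ → (H →L[ℂ] H)) : Prop :=
  ∃ C, 0 ≤ C ∧ MlBoundedBy A C

/-- A matrix polynomial: supported on finitely many diagonals, with uniformly
bounded operator entries. -/
def IsMatPoly (A : ℕ → ℕ → (H →L[ℂ] H)) : Prop :=
  (∃ N : ℕ, ∀ k j : ℕ, N < ((j : ℤ) - (k : ℤ)).natAbs → A k j = 0) ∧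
    ∃ M : ℝ, ∀ k j : ℕ, ‖A k j‖ ≤ M

/-- `A ∈ L¹_r(ℓ²(H))`: `A` is a right Schur multiplier lying in the closure of the
matrix polynomials in the right multiplier norm. -/
def MemL1r (A : ℕ → ℕ → (H →L[ℂ] H)) : Prop :=
  MemMr A ∧ ∀ ε : ℝ, 0 < ε → ∃ P : ℕ → ℕ → (H →L[ℂ] H),
    IsMatPoly P ∧ MrBoundedBy (fun k j => A k j - P k j) ε

/-- `A ∈ L¹_l(ℓ²(H))`: `A` is a left Schur multiplier lying in the closure of the
matrix polynomials in the left multiplier norm. -/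
def MemL1l (A : ℕ → ℕ → (H →L[ℂ] H)) : Prop :=
  MemMl A ∧ ∀ ε : ℝ, 0 < ε → ∃ P : ℕ → ℕ → (H →L[ℂ] H),
    IsMatPoly P ∧ MlBoundedBy (fun k j => A k j - P k j) ε

/-- The matrix with a single identity entry at `(k₀, j₀)` is Schur-bounded by `1`. -/
lemma single_schurBoundedBy (k₀ j₀ : ℕ) :
    SchurBoundedBy (fun k j => if k = k₀ ∧ j = j₀ then
      (ContinuousLinearMap.id ℂ H) else 0) 1 := by
  intro F G x y
  have key : ∑ k ∈ G, ∑ j ∈ F,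
      (inner ℂ ((if k = k₀ ∧ j = j₀ then (ContinuousLinearMap.id ℂ H) else 0) (x j)) (y k) : ℂ)
      = if k₀ ∈ G ∧ j₀ ∈ F then (inner ℂ (x j₀) (y k₀) : ℂ) else 0 := by
    have h1 : ∀ k, ∑ j ∈ F,
        (inner ℂ ((if k = k₀ ∧ j = j₀ then (ContinuousLinearMap.id ℂ H) else 0) (x j)) (y k) : ℂ)
        = if k = k₀ then (if j₀ ∈ F then (inner ℂ (x j₀) (y k₀) : ℂ) else 0) else 0 := by
      intro k
      by_cases hk : k = k₀
      · subst hk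
        rw [if_pos rfl]
        rw [show (∑ j ∈ F,
            (inner ℂ ((if k = k ∧ j = j₀ then (ContinuousLinearMap.id ℂ H) else 0) (x j)) (y k) : ℂ))
            = ∑ j ∈ F, if j = j₀ then (inner ℂ (x j₀) (y k) : ℂ) else 0 from
          Finset.sum_congr rfl fun j _ => by
            by_cases hj : j = j₀ <;> simp [hj]]
        simp [Finset.sum_ite_eq']
      · rw [if_neg hk]
        refine Finset.sum_eq_zero fun j _ => ?_
        have : ¬(k = k₀ ∧ j = j₀) := fun h => hk h.1
        simp [this]
    rw [Finset.sum_congr rfl fun k _ => h1 k]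
    by_cases hk : k₀ ∈ G
    · rw [Finset.sum_ite_eq' G k₀ (fun _ => if j₀ ∈ F then (inner ℂ (x j₀) (y k₀) : ℂ) else 0),
        if_pos hk]
      by_cases hj : j₀ ∈ F <;> simp [hj, hk]
    · rw [Finset.sum_ite_eq' G k₀ (fun _ => if j₀ ∈ F then (inner ℂ (x j₀) (y k₀) : ℂ) else 0),
        if_neg hk]
      simp [hk]
  rw [key]
  have sx : 0 ≤ ∑ j ∈ F, ‖x j‖ ^ 2 := Finset.sum_nonneg fun _ _ => sq_nonneg _
  have sy : 0 ≤ ∑ k ∈ G, ‖y k‖ ^ 2 := Finset.sum_nonneg fun _ _ => sq_nonneg _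
  by_cases h : k₀ ∈ G ∧ j₀ ∈ F
  · rw [if_pos h]
    have hx : ‖x j₀‖ ≤ Real.sqrt (∑ j ∈ F, ‖x j‖ ^ 2) := by
      rw [show ‖x j₀‖ = Real.sqrt (‖x j₀‖ ^ 2) by rw [Real.sqrt_sq (norm_nonneg _)]]
      exact Real.sqrt_le_sqrt (Finset.single_le_sum (f := fun j => ‖x j‖ ^ 2) (fun _ _ => sq_nonneg _) h.2)
    have hy : ‖y k₀‖ ≤ Real.sqrt (∑ k ∈ G, ‖y k‖ ^ 2) := by
      rw [show ‖y k₀‖ = Real.sqrt (‖y k₀‖ ^ 2) by rw [Real.sqrt_sq (norm_nonneg _)]]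
      exact Real.sqrt_le_sqrt (Finset.single_le_sum (f := fun k => ‖y k‖ ^ 2) (fun _ _ => sq_nonneg _) h.1)
    calc ‖(inner ℂ (x j₀) (y k₀) : ℂ)‖ ≤ ‖x j₀‖ * ‖y k₀‖ := norm_inner_le_norm _ _
      _ ≤ Real.sqrt (∑ j ∈ F, ‖x j‖ ^ 2) * Real.sqrt (∑ k ∈ G, ‖y k‖ ^ 2) :=
          mul_le_mul hx hy (norm_nonneg _) (Real.sqrt_nonneg _)
      _ = 1 * Real.sqrt (∑ j ∈ F, ‖x j‖ ^ 2) * Real.sqrt (∑ k ∈ G, ‖y k‖ ^ 2) := by ring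
  · rw [if_neg h]
    simp only [norm_zero]
    positivity

/-- Riemann–Lebesgue lemma for matrix multipliers: if `A ∈ L¹_r(ℓ²(H))`, then the
operator norms of its diagonals `D_l` (which equal `sup_k ‖T_{k,k+l}‖`) tend to `0`
as `|l| → ∞`. -/
theorem riemann_lebesgue_diagonals (A : ℕ → ℕ → (H →L[ℂ] H)) (hA : MemL1r A) :
    ∀ ε : ℝ, 0 < ε → ∃ N : ℕ, ∀ k j : ℕ,
      N < ((j : ℤ) - (k : ℤ)).natAbs → ‖A k j‖ ≤ ε := by
  intro ε hε
  obtain ⟨_, hclose⟩ := hA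
  obtain ⟨P, ⟨⟨N, hN⟩, _⟩, hPE⟩ := hclose ε hε
  refine ⟨N, fun k j hkj => ?_⟩
  have hP0 : P k j = 0 := hN k j hkj
  have hS := hPE (fun k' j' => if k' = k ∧ j' = j then (ContinuousLinearMap.id ℂ H) else 0)
    1 zero_le_one (single_schurBoundedBy k j)
  -- entry bound
  have hbnd : ∀ x : H, ‖(A k j - P k j) x‖ ≤ ε * ‖x‖ := by
    intro x
    set v := (A k j - P k j) x with hv
    have := hS {j} {k} (fun _ => x) (fun _ => v)
    simp only [Finset.sum_singleton] at this
    have hentry : (schur (fun k' j' => if k' = k ∧ j' = j then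
        (ContinuousLinearMap.id ℂ H) else 0) (fun k' j' => A k' j' - P k' j')) k j = A k j - P k j := by
      simp [schur]
    rw [hentry] at this
    have hin : (inner ℂ v v : ℂ) = (‖v‖ : ℂ) ^ 2 := inner_self_eq_norm_sq_to_K v
    rw [← hv, hin] at this
    have hlhs : ‖((‖v‖ : ℂ)) ^ 2‖ = ‖v‖ ^ 2 := by
      rw [norm_pow, Complex.norm_real, Real.norm_eq_abs, abs_of_nonneg (norm_nonneg v)]
    rw [hlhs, Real.sqrt_sq (norm_nonneg x), Real.sqrt_sq (norm_nonneg v), mul_one] at this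
    rcases eq_or_lt_of_le (norm_nonneg v) with hv0 | hv0
    · rw [← hv0]; positivity
    · have : ‖v‖ * ‖v‖ ≤ (ε * ‖x‖) * ‖v‖ := by nlinarith [this]
      exact le_of_mul_le_mul_right this hv0
  have := ContinuousLinearMap.opNorm_le_bound (A k j - P k j) (le_of_lt hε) hbnd
  rwa [hP0, sub_zero] at this
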